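/- Let B be a nonempty finite family of subsets of [n], let λ ∈ ℝ₊ⁿ, and let p = (p₁,...,pₙ) be the marginals of the probability distribution on B proportional to λ^S = Πᵢ∈S λᵢ. Then Σᵢ₌₁ⁿ (pᵢ log(λᵢ/pᵢ) + (1−pᵢ) log(1/(1−pᵢ))) ≥ log(Σ_{B∈B} λ^B). -/

import Mathlib

lemma swap_sum_mem {n : ℕ} (ℬ : Finset (Finset (Fin n))) (f : Finset (Fin n) → Fin n → ℝ) :
    ∑ S ∈ ℬ, ∑ i ∈ S, f S i = ∑ i : Fin n, ∑ S ∈ ℬ.filter (fun S => i ∈ S), f S i := by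
  classical
  calc ∑ S ∈ ℬ, ∑ i ∈ S, f S i
      = ∑ S ∈ ℬ, ∑ i : Fin n, if i ∈ S then f S i else 0 := by
        refine Finset.sum_congr rfl fun S _ => ?_
        rw [Finset.sum_ite_mem, Finset.univ_inter]
    _ = ∑ i : Fin n, ∑ S ∈ ℬ, if i ∈ S then f S i else 0 := Finset.sum_comm
    _ = ∑ i : Fin n, ∑ S ∈ ℬ.filter (fun S => i ∈ S), f S i := by
        refine Finset.sum_congr rfl fun i _ => (Finset.sum_filter _ _).symm

lemma swap_sum_compl {n : ℕ} (ℬ : Finset (Finset (Fin n))) (f : Finset (Fin n) → Fin n → ℝ) :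
    ∑ S ∈ ℬ, ∑ i ∈ Sᶜ, f S i = ∑ i : Fin n, ∑ S ∈ ℬ.filter (fun S => i ∉ S), f S i := by
  classical
  calc ∑ S ∈ ℬ, ∑ i ∈ Sᶜ, f S i
      = ∑ S ∈ ℬ, ∑ i : Fin n, if i ∉ S then f S i else 0 := by
        refine Finset.sum_congr rfl fun S _ => ?_
        rw [show (Sᶜ : Finset (Fin n)) = Finset.univ.filter (fun i => i ∉ S) by
          ext i; simp, Finset.sum_filter]
    _ = ∑ i : Fin n, ∑ S ∈ ℬ, if i ∉ S then f S i else 0 := Finset.sum_comm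
    _ = ∑ i : Fin n, ∑ S ∈ ℬ.filter (fun S => i ∉ S), f S i := by
        refine Finset.sum_congr rfl fun i _ => (Finset.sum_filter _ _).symm

/-- **Weighted upper bound via marginal entropies.** Let `B` be a nonempty family of
subsets of `[n]`, `λ ∈ ℝ₊ⁿ`, `Z = ∑_{B ∈ B} λ^B > 0`, and let `p i` be the marginals of
the distribution on `B` proportional to `λ^S`. Then
`∑ᵢ (pᵢ log(λᵢ/pᵢ) + (1-pᵢ) log(1/(1-pᵢ))) ≥ log Z`. -/
theorem weighted_entropy_upper_bound
    {n : ℕ} (ℬ : Finset (Finset (Fin n))) (hne : ℬ.Nonempty)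
    (lam : Fin n → ℝ) (hlam : ∀ i, 0 ≤ lam i)
    (Z : ℝ) (hZ : Z = ∑ B ∈ ℬ, ∏ i ∈ B, lam i) (hZpos : 0 < Z)
    (p : Fin n → ℝ)
    (hp : ∀ i, p i = (∑ S ∈ ℬ.filter (fun S => i ∈ S), ∏ j ∈ S, lam j) / Z) :
    Real.log Z ≤
      ∑ i : Fin n,
        (p i * Real.log (lam i / p i) +
          (1 - p i) * Real.log (1 / (1 - p i))) := by
  classical
  set w : Finset (Fin n) → ℝ := fun S => ∏ i ∈ S, lam i with hwdef
  set q : Finset (Fin n) → ℝ := fun S => w S / Z with hqdef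
  have hw0 : ∀ S, 0 ≤ w S := fun S => Finset.prod_nonneg fun i _ => hlam i
  have hq0 : ∀ S, 0 ≤ q S := fun S => div_nonneg (hw0 S) hZpos.le
  have hqw : ∀ S, q S ≠ 0 → 0 < w S := by
    intro S hS
    rcases (hw0 S).lt_or_eq with h | h
    · exact h
    · exact absurd (by simp [hqdef, ← h]) hS
  have hqsum : ∑ S ∈ ℬ, q S = 1 := by
    simp only [hqdef]
    rw [← Finset.sum_div, ← hZ, div_self hZpos.ne']
  have hpq : ∀ i, p i = ∑ S ∈ ℬ.filter (fun S => i ∈ S), q S := by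
    intro i; rw [hp i, Finset.sum_div]
  have hp0 : ∀ i, 0 ≤ p i := fun i => (hpq i) ▸ Finset.sum_nonneg fun S _ => hq0 S
  have hp1 : ∀ i, p i ≤ 1 := by
    intro i
    rw [hpq i, ← hqsum]
    exact Finset.sum_le_sum_of_subset_of_nonneg (Finset.filter_subset _ _)
      fun S _ _ => hq0 S
  have hcompl : ∀ i, ∑ S ∈ ℬ.filter (fun S => i ∉ S), q S = 1 - p i := by
    intro i
    have h := Finset.sum_filter_add_sum_filter_not ℬ (fun S => i ∈ S) q
    rw [hqsum] at h
    have h2 := hpq i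
    linarith
  have hmem_pos : ∀ S ∈ ℬ, q S ≠ 0 → ∀ i ∈ S, 0 < p i := by
    intro S hS hq i hi
    have h : q S ≤ p i := by
      rw [hpq i]
      exact Finset.single_le_sum (fun T _ => hq0 T) (Finset.mem_filter.2 ⟨hS, hi⟩)
    exact lt_of_lt_of_le ((hq0 S).lt_of_ne (Ne.symm hq)) h
  have hnotmem_pos : ∀ S ∈ ℬ, q S ≠ 0 → ∀ i, i ∉ S → p i < 1 := by
    intro S hS hq i hi
    have h : q S ≤ 1 - p i := by
      rw [← hcompl i]
      exact Finset.single_le_sum (fun T _ => hq0 T) (Finset.mem_filter.2 ⟨hS, hi⟩)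
    have := (hq0 S).lt_of_ne (Ne.symm hq)
    linarith
  have hlamp : ∀ i, lam i = 0 → p i = 0 := by
    intro i h
    rw [hpq i]
    refine Finset.sum_eq_zero fun S hS => ?_
    have hwS : w S = 0 := Finset.prod_eq_zero (Finset.mem_filter.1 hS).2 h
    simp [hqdef, hwS]
  set r : Finset (Fin n) → ℝ := fun S => (∏ i ∈ S, p i) * ∏ i ∈ Sᶜ, (1 - p i) with hrdef
  have hr0 : ∀ S, 0 ≤ r S := fun S =>
    mul_nonneg (Finset.prod_nonneg fun i _ => hp0 i)
      (Finset.prod_nonneg fun i _ => by linarith [hp1 i])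
  have hrsum : ∑ S ∈ ℬ, r S ≤ 1 := by
    have h2 : (∏ i : Fin n, (p i + (1 - p i))) = 1 := by simp
    rw [Finset.prod_add, Finset.powerset_univ] at h2
    have h1 : ∑ S : Finset (Fin n), r S = 1 := by
      rw [← h2]
      exact Finset.sum_congr rfl fun t _ => by
        simp only [hrdef, Finset.compl_eq_univ_sdiff]
    calc ∑ S ∈ ℬ, r S ≤ ∑ S : Finset (Fin n), r S :=
          Finset.sum_le_sum_of_subset_of_nonneg (Finset.subset_univ ℬ)
            fun S _ _ => hr0 S
      _ = 1 := h1
  have hrpos : ∀ S ∈ ℬ, q S ≠ 0 → 0 < r S := by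
    intro S hS hq
    refine mul_pos (Finset.prod_pos fun i hi => hmem_pos S hS hq i hi)
      (Finset.prod_pos fun i hi => ?_)
    have := hnotmem_pos S hS hq i (Finset.mem_compl.1 hi)
    linarith
  have hgibbs : ∑ S ∈ ℬ, q S * (Real.log (r S) - Real.log (q S)) ≤ 0 := by
    have step : ∀ S ∈ ℬ, q S * (Real.log (r S) - Real.log (q S)) ≤ r S - q S := by
      intro S hS
      by_cases hq : q S = 0
      · simp [hq, hr0 S]
      · have hqpos : 0 < q S := (hq0 S).lt_of_ne (Ne.symm hq)
        have hrp := hrpos S hS hq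
        have h1 : Real.log (r S) - Real.log (q S) = Real.log (r S / q S) :=
          (Real.log_div hrp.ne' hqpos.ne').symm
        rw [h1]
        have h2 : Real.log (r S / q S) ≤ r S / q S - 1 :=
          Real.log_le_sub_one_of_pos (div_pos hrp hqpos)
        calc q S * Real.log (r S / q S) ≤ q S * (r S / q S - 1) :=
              mul_le_mul_of_nonneg_left h2 hqpos.le
          _ = r S - q S := by field_simp
    calc ∑ S ∈ ℬ, q S * (Real.log (r S) - Real.log (q S)) ≤ ∑ S ∈ ℬ, (r S - q S) :=
          Finset.sum_le_sum step
      _ = (∑ S ∈ ℬ, r S) - 1 := by rw [Finset.sum_sub_distrib, hqsum]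
      _ ≤ 0 := by linarith
  have hA : Real.log Z = ∑ S ∈ ℬ, q S * (Real.log (w S) - Real.log (q S)) := by
    have step : ∀ S ∈ ℬ, q S * (Real.log (w S) - Real.log (q S)) = q S * Real.log Z := by
      intro S hS
      by_cases hq : q S = 0
      · simp [hq]
      · have hwpos := hqw S hq
        have h : Real.log (q S) = Real.log (w S) - Real.log Z := by
          simp only [hqdef]
          exact Real.log_div hwpos.ne' hZpos.ne'
        rw [h]; ring
    rw [Finset.sum_congr rfl step, ← Finset.sum_mul, hqsum, one_mul]
  have hclaim1 : ∑ S ∈ ℬ, q S * Real.log (w S) = ∑ i : Fin n, p i * Real.log (lam i) := by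
    have step : ∀ S ∈ ℬ, q S * Real.log (w S) = ∑ i ∈ S, q S * Real.log (lam i) := by
      intro S _
      by_cases hq : q S = 0
      · simp [hq]
      · rw [← Finset.mul_sum]
        congr 1
        exact Real.log_prod (s := S) (f := lam) fun i hi h =>
          hq (by simp [hqdef, hwdef, Finset.prod_eq_zero hi h])
    rw [Finset.sum_congr rfl step, swap_sum_mem]
    refine Finset.sum_congr rfl fun i _ => ?_
    rw [← Finset.sum_mul, ← hpq i]
  have hclaim2 : ∑ S ∈ ℬ, q S * Real.log (r S)
      = (∑ i : Fin n, p i * Real.log (p i)) + ∑ i : Fin n, (1 - p i) * Real.log (1 - p i) := by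
    have step : ∀ S ∈ ℬ, q S * Real.log (r S)
        = (∑ i ∈ S, q S * Real.log (p i)) + ∑ i ∈ Sᶜ, q S * Real.log (1 - p i) := by
      intro S hS
      by_cases hq : q S = 0
      · simp [hq]
      · have h1 : ∀ i ∈ S, p i ≠ 0 := fun i hi => (hmem_pos S hS hq i hi).ne'
        have h2 : ∀ i ∈ Sᶜ, (1 - p i) ≠ 0 := fun i hi => by
          have := hnotmem_pos S hS hq i (Finset.mem_compl.1 hi); intro hc; linarith
        rw [← Finset.mul_sum, ← Finset.mul_sum, ← mul_add]
        congr 1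
        simp only [hrdef]
        rw [Real.log_mul (Finset.prod_ne_zero_iff.2 h1) (Finset.prod_ne_zero_iff.2 h2),
          Real.log_prod h1, Real.log_prod h2]
    rw [Finset.sum_congr rfl step, Finset.sum_add_distrib, swap_sum_mem, swap_sum_compl]
    congr 1
    · exact Finset.sum_congr rfl fun i _ => by rw [← Finset.sum_mul, ← hpq i]
    · exact Finset.sum_congr rfl fun i _ => by rw [← Finset.sum_mul, hcompl i]
  have hRHS : ∑ i : Fin n, (p i * Real.log (lam i / p i) + (1 - p i) * Real.log (1 / (1 - p i)))
      = (∑ i : Fin n, p i * Real.log (lam i))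
        - ((∑ i : Fin n, p i * Real.log (p i)) + ∑ i : Fin n, (1 - p i) * Real.log (1 - p i)) := by
    have step : ∀ i : Fin n, p i * Real.log (lam i / p i) + (1 - p i) * Real.log (1 / (1 - p i))
        = p i * Real.log (lam i) - (p i * Real.log (p i) + (1 - p i) * Real.log (1 - p i)) := by
      intro i
      have h2 : Real.log (1 / (1 - p i)) = - Real.log (1 - p i) := by
        rw [one_div, Real.log_inv]
      by_cases hpi : p i = 0
      · simp [hpi, h2]
      · have hlami : lam i ≠ 0 := fun h => hpi (hlamp i h)
        rw [Real.log_div hlami hpi, h2]; ring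
    rw [Finset.sum_congr rfl fun i _ => step i, Finset.sum_sub_distrib, Finset.sum_add_distrib]
  have hsplit : ∑ S ∈ ℬ, q S * (Real.log (w S) - Real.log (q S))
      = (∑ S ∈ ℬ, q S * (Real.log (w S) - Real.log (r S)))
        + ∑ S ∈ ℬ, q S * (Real.log (r S) - Real.log (q S)) := by
    rw [← Finset.sum_add_distrib]
    exact Finset.sum_congr rfl fun S _ => by ring
  have hB : ∑ S ∈ ℬ, q S * (Real.log (w S) - Real.log (r S))
      = ∑ i : Fin n, (p i * Real.log (lam i / p i) + (1 - p i) * Real.log (1 / (1 - p i))) := by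
    have h : ∑ S ∈ ℬ, q S * (Real.log (w S) - Real.log (r S))
        = (∑ S ∈ ℬ, q S * Real.log (w S)) - ∑ S ∈ ℬ, q S * Real.log (r S) := by
      rw [← Finset.sum_sub_distrib]
      exact Finset.sum_congr rfl fun S _ => by ring
    rw [h, hclaim1, hclaim2, hRHS]
  linarith
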